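/- Let d ≥ 2, 1 ≤ N ≤ d, and consider the uniform state A(S) = 1/√C(d,N) over N-subsets S of Fin d. For the one-particle reduced matrix ρ(k,l) := ∑_{T : (N−1)-subsets, k∉T, l∉T} A(T∪{k}) · conj(A(T∪{l})) (k, l ∈ Fin d), one has ρ(k,k) = N/d for all k and ρ(k,l) = N(d−N)/(d(d−1)) for k ≠ l, and the largest eigenvalue of ρ is (N/d)(d − N + 1), with eigenvector (1,…,1)/√d. -/

import Mathlib

open Finset Matrix

private theorem stmt17_nat_id1 (d N : ℕ) (hd : 2 ≤ d) (hN1 : 1 ≤ N) :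
    d * (d-1).choose (N-1) = N * d.choose N := by
  have h := Nat.add_one_mul_choose_eq (d-1) (N-1)
  rw [show d-1+1 = d from by omega, show N-1+1 = N from by omega] at h
  rw [h]; ring

private theorem stmt17_nat_id2 (d N : ℕ) (hd : 2 ≤ d) (hN1 : 1 ≤ N) (hNd : N ≤ d) :
    (d-2).choose (N-1) * (d * (d-1)) = N * (d - N) * d.choose N := by
  have h1 : (d-1) * (d-2).choose (N-1) = (d-1).choose N * N := by
    have h := Nat.add_one_mul_choose_eq (d-2) (N-1)
    rw [show d-2+1 = d-1 from by omega, show N-1+1 = N from by omega] at h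
    exact h
  have h2 : d * (d-1).choose N = d.choose N * (d - N) := by
    have ha := Nat.add_one_mul_choose_eq (d-1) N
    rw [show d-1+1 = d from by omega] at ha
    have hb := Nat.choose_succ_right_eq d N
    omega
  calc (d-2).choose (N-1) * (d * (d-1)) = d * ((d-1) * (d-2).choose (N-1)) := by ring
    _ = d * ((d-1).choose N * N) := by rw [h1]
    _ = N * (d * (d-1).choose N) := by ring
    _ = N * (d.choose N * (d-N)) := by rw [h2]
    _ = N * (d - N) * d.choose N := by ring

private theorem stmt17_card1 (d N : ℕ) (k : Fin d) :
    ((Finset.powersetCard (N - 1) (Finset.univ : Finset (Fin d))).filter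
          (fun T => k ∉ T ∧ k ∉ T)).card = (d-1).choose (N-1) := by
  have : ((Finset.powersetCard (N - 1) (Finset.univ : Finset (Fin d))).filter
          (fun T => k ∉ T ∧ k ∉ T)) = Finset.powersetCard (N-1) ({k}ᶜ) := by
    ext T
    simp only [Finset.mem_filter, Finset.mem_powersetCard, Finset.subset_univ, true_and,
      and_self]
    constructor
    · rintro ⟨hc, hk⟩
      refine ⟨fun x hx => ?_, hc⟩
      simp only [Finset.mem_compl, Finset.mem_singleton]
      rintro rfl; exact hk hx
    · rintro ⟨hs, hc⟩
      exact ⟨hc, fun h => by simpa using hs h⟩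
  rw [this, Finset.card_powersetCard, Finset.card_compl]
  simp

private theorem stmt17_card2 (d N : ℕ) (k l : Fin d) (hkl : k ≠ l) :
    ((Finset.powersetCard (N - 1) (Finset.univ : Finset (Fin d))).filter
          (fun T => k ∉ T ∧ l ∉ T)).card = (d-2).choose (N-1) := by
  have : ((Finset.powersetCard (N - 1) (Finset.univ : Finset (Fin d))).filter
          (fun T => k ∉ T ∧ l ∉ T)) = Finset.powersetCard (N-1) ({k,l}ᶜ) := by
    ext T
    simp only [Finset.mem_filter, Finset.mem_powersetCard, Finset.subset_univ, true_and]
    constructor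
    · rintro ⟨hc, hk, hl⟩
      refine ⟨fun x hx => ?_, hc⟩
      simp only [Finset.mem_compl, Finset.mem_insert, Finset.mem_singleton]
      push_neg
      constructor <;> rintro rfl
      · exact hk hx
      · exact hl hx
    · rintro ⟨hs, hc⟩
      refine ⟨hc, fun h => by simpa using hs h, fun h => by simpa using hs h⟩
  rw [this, Finset.card_powersetCard, Finset.card_compl]
  rw [Finset.card_insert_of_notMem (by simpa using hkl), Finset.card_singleton]
  simp

theorem stmt17 (d N : ℕ) (hd : 2 ≤ d) (hN1 : 1 ≤ N) (hNd : N ≤ d)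
    (A : Finset (Fin d) → ℂ) (hA : ∀ S, A S = ((1 / Real.sqrt (d.choose N) : ℝ) : ℂ))
    (ρ : Matrix (Fin d) (Fin d) ℂ)
    (hρ : ∀ k l, ρ k l =
      ∑ T ∈ (Finset.powersetCard (N - 1) (Finset.univ : Finset (Fin d))).filter
          (fun T => k ∉ T ∧ l ∉ T),
        A (insert k T) * (starRingEnd ℂ) (A (insert l T))) :
    (∀ k, ρ k k = ((N : ℂ) / d)) ∧
    (∀ k l, k ≠ l → ρ k l = (N : ℂ) * ((d : ℂ) - N) / ((d : ℂ) * ((d : ℂ) - 1))) ∧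
    (ρ.mulVec (fun _ => ((1 / Real.sqrt d : ℝ) : ℂ))
      = (((N : ℂ) / d) * ((d : ℂ) - N + 1)) • (fun _ => ((1 / Real.sqrt d : ℝ) : ℂ))) ∧
    (∀ μ : ℝ, (μ : ℂ) ∈ spectrum ℂ ρ → μ ≤ ((N : ℝ) / d) * ((d : ℝ) - N + 1)) := by
  have hCpos : 0 < d.choose N := Nat.choose_pos hNd
  have hC0 : ((d.choose N : ℕ) : ℂ) ≠ 0 := by exact_mod_cast hCpos.ne'
  have hd0 : (d : ℂ) ≠ 0 := by
    exact_mod_cast (by omega : d ≠ 0)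
  have hd1 : (d : ℂ) - 1 ≠ 0 := by
    have : ((d - 1 : ℕ) : ℂ) ≠ 0 := by exact_mod_cast (by omega : d - 1 ≠ 0)
    rwa [Nat.cast_sub (by omega), Nat.cast_one] at this
  -- each summand equals 1 / choose
  have hterm : ((1 / Real.sqrt (d.choose N) : ℝ) : ℂ) *
      (starRingEnd ℂ) ((1 / Real.sqrt (d.choose N) : ℝ) : ℂ) = 1 / ((d.choose N : ℕ) : ℂ) := by
    rw [Complex.conj_ofReal, ← Complex.ofReal_mul]
    rw [show (1 / Real.sqrt (d.choose N)) * (1 / Real.sqrt (d.choose N))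
        = 1 / ((d.choose N : ℕ) : ℝ) by
      rw [div_mul_div_comm, one_mul, Real.mul_self_sqrt (by positivity)]]
    push_cast
    ring
  have hentry : ∀ k l : Fin d, ρ k l =
      ((((Finset.powersetCard (N - 1) (Finset.univ : Finset (Fin d))).filter
          (fun T => k ∉ T ∧ l ∉ T)).card : ℕ) : ℂ) / ((d.choose N : ℕ) : ℂ) := by
    intro k l
    rw [hρ, Finset.sum_congr rfl (fun T _ => by rw [hA, hA, hterm]),
      Finset.sum_const, nsmul_eq_mul]
    ring
  set a : ℂ := (N : ℂ) / d with ha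
  set b : ℂ := (N : ℂ) * ((d : ℂ) - N) / ((d : ℂ) * ((d : ℂ) - 1)) with hb
  have hdiag : ∀ k, ρ k k = a := by
    intro k
    rw [hentry, stmt17_card1, ha, div_eq_div_iff hC0 hd0]
    have h := stmt17_nat_id1 d N hd hN1
    rw [mul_comm]
    exact_mod_cast h
  have hoff : ∀ k l, k ≠ l → ρ k l = b := by
    intro k l hkl
    rw [hentry, stmt17_card2 d N k l hkl, hb]
    rw [div_eq_div_iff hC0 (mul_ne_zero hd0 hd1)]
    have h := stmt17_nat_id2 d N hd hN1 hNd
    have hcast : (((d - N : ℕ) : ℂ)) = (d : ℂ) - N := by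
      rw [Nat.cast_sub hNd]
    calc (((d-2).choose (N-1) : ℕ) : ℂ) * ((d : ℂ) * ((d : ℂ) - 1))
        = (((d-2).choose (N-1) * (d * (d-1)) : ℕ) : ℂ) := by
          push_cast [Nat.cast_sub (by omega : 1 ≤ d)]; ring
      _ = (((N * (d - N) * d.choose N : ℕ)) : ℂ) := by rw [h]
      _ = (N : ℂ) * ((d : ℂ) - N) * ((d.choose N : ℕ) : ℂ) := by
          push_cast [Nat.cast_sub hNd]; ring
  have hρeq : ∀ k l, ρ k l = if k = l then a else b := by
    intro k l
    by_cases h : k = l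
    · subst h; simp [hdiag k]
    · simp [h, hoff k l h]
  -- row and column sums
  have hsum_col : ∀ j : Fin d, ∑ m, ρ m j = a + ((d : ℂ) - 1) * b := by
    intro j
    have : ∀ m : Fin d, ρ m j = b + (if m = j then a - b else 0) := by
      intro m; rw [hρeq]; by_cases h : m = j <;> simp [h]
    rw [Finset.sum_congr rfl (fun m _ => this m), Finset.sum_add_distrib,
      Finset.sum_const, Finset.sum_ite_eq' Finset.univ j (fun _ => a - b)]
    simp only [Finset.mem_univ, if_true, Finset.card_univ, Fintype.card_fin, nsmul_eq_mul]
    ring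
  have hsum_row : ∀ k : Fin d, ∑ l, ρ k l = a + ((d : ℂ) - 1) * b := by
    intro k
    have : ∀ l : Fin d, ρ k l = b + (if k = l then a - b else 0) := by
      intro l; rw [hρeq]; by_cases h : k = l <;> simp [h]
    rw [Finset.sum_congr rfl (fun l _ => this l), Finset.sum_add_distrib,
      Finset.sum_const, Finset.sum_ite_eq Finset.univ k (fun _ => a - b)]
    simp only [Finset.mem_univ, if_true, Finset.card_univ, Fintype.card_fin, nsmul_eq_mul]
    ring
  have hkey : a + ((d : ℂ) - 1) * b = ((N : ℂ) / d) * ((d : ℂ) - N + 1) := by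
    rw [ha, hb]
    field_simp
    ring
  refine ⟨hdiag, hoff, ?_, ?_⟩
  · -- eigenvector
    funext k
    simp only [Matrix.mulVec, dotProduct, Pi.smul_apply, smul_eq_mul]
    calc ∑ l, ρ k l * ((1 / Real.sqrt d : ℝ) : ℂ)
        = (∑ l, ρ k l) * ((1 / Real.sqrt d : ℝ) : ℂ) := by rw [Finset.sum_mul]
      _ = (a + ((d : ℂ) - 1) * b) * ((1 / Real.sqrt d : ℝ) : ℂ) := by rw [hsum_row]
      _ = ((N : ℂ) / d) * ((d : ℂ) - N + 1) * ((1 / Real.sqrt d : ℝ) : ℂ) := by rw [hkey]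
  · -- spectrum bound
    intro μ hμ
    obtain ⟨x, hx⟩ : ∃ x : ℂ, x = a - b := ⟨_, rfl⟩
    obtain ⟨y, hy⟩ : ∃ y : ℂ, y = a + ((d : ℂ) - 1) * b := ⟨_, rfl⟩
    -- the factored quadratic annihilates ρ
    have hM1 : ∀ i m : Fin d, (ρ - x • (1 : Matrix (Fin d) (Fin d) ℂ)) i m = b := by
      intro i m
      simp only [Matrix.sub_apply, Matrix.smul_apply, Matrix.one_apply, hρeq, smul_eq_mul]
      by_cases h : i = m <;> simp [h, hx]
    have hfact : (ρ - x • (1 : Matrix (Fin d) (Fin d) ℂ)) *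
        (ρ - y • (1 : Matrix (Fin d) (Fin d) ℂ)) = 0 := by
      ext i j
      simp only [Matrix.mul_apply, Matrix.zero_apply]
      calc ∑ m, (ρ - x • (1 : Matrix (Fin d) (Fin d) ℂ)) i m *
            (ρ - y • (1 : Matrix (Fin d) (Fin d) ℂ)) m j
          = ∑ m, b * (ρ - y • (1 : Matrix (Fin d) (Fin d) ℂ)) m j := by
            exact Finset.sum_congr rfl (fun m _ => by rw [hM1])
        _ = b * ∑ m, (ρ - y • (1 : Matrix (Fin d) (Fin d) ℂ)) m j := by
            rw [Finset.mul_sum]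
        _ = 0 := by
            have : ∑ m, (ρ - y • (1 : Matrix (Fin d) (Fin d) ℂ)) m j
                = (∑ m, ρ m j) - ∑ m, (y • (1 : Matrix (Fin d) (Fin d) ℂ)) m j := by
              simp only [Matrix.sub_apply]
              rw [Finset.sum_sub_distrib]
            have h2 : ∑ m, (y • (1 : Matrix (Fin d) (Fin d) ℂ)) m j = y := by
              simp [Matrix.smul_apply, Matrix.one_apply]
            rw [this, h2, hsum_col, ← hy, sub_self, mul_zero]
    -- spectral mapping
    have hnontriv : Nonempty (Fin d) := ⟨⟨0, by omega⟩⟩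
    have hquad : ((μ : ℂ) - x) * ((μ : ℂ) - y) = 0 := by
      have haeval : (Polynomial.aeval ρ) ((Polynomial.X - Polynomial.C x) *
          (Polynomial.X - Polynomial.C y)) = 0 := by
        rw [_root_.map_mul, map_sub, map_sub, Polynomial.aeval_X, Polynomial.aeval_C,
          Polynomial.aeval_C, Algebra.algebraMap_eq_smul_one, Algebra.algebraMap_eq_smul_one]
        exact hfact
      have hsub := spectrum.subset_polynomial_aeval ρ
        ((Polynomial.X - Polynomial.C x) * (Polynomial.X - Polynomial.C y))
      have hmem : Polynomial.eval (μ : ℂ) ((Polynomial.X - Polynomial.C x) *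
          (Polynomial.X - Polynomial.C y)) ∈
          spectrum ℂ ((Polynomial.aeval ρ) ((Polynomial.X - Polynomial.C x) *
            (Polynomial.X - Polynomial.C y))) := hsub ⟨(μ : ℂ), hμ, rfl⟩
      rw [haeval, spectrum.zero_eq] at hmem
      have h0 : Polynomial.eval (μ : ℂ) ((Polynomial.X - Polynomial.C x) *
          (Polynomial.X - Polynomial.C y)) = 0 := by simpa using hmem
      simpa [Polynomial.eval_mul, Polynomial.eval_sub, Polynomial.eval_X,
        Polynomial.eval_C] using h0
    -- b ≥ 0 as a real, and conclude
    have hbr : b = (((N : ℝ) * ((d : ℝ) - N) / ((d : ℝ) * ((d : ℝ) - 1)) : ℝ) : ℂ) := by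
      rw [hb]; push_cast; ring
    have har : a = (((N : ℝ) / d : ℝ) : ℂ) := by rw [ha]; push_cast; ring
    have hbnn : (0 : ℝ) ≤ (N : ℝ) * ((d : ℝ) - N) / ((d : ℝ) * ((d : ℝ) - 1)) := by
      apply div_nonneg
      · apply mul_nonneg (by positivity)
        have : (N : ℝ) ≤ (d : ℝ) := by exact_mod_cast hNd
        linarith
      · apply mul_nonneg (by positivity)
        have : (2 : ℝ) ≤ (d : ℝ) := by exact_mod_cast hd
        linarith
    have hd2r : (2 : ℝ) ≤ (d : ℝ) := by exact_mod_cast hd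
    have hd0r : (d : ℝ) ≠ 0 := by linarith
    have hd1r : (d : ℝ) - 1 ≠ 0 := by linarith
    have hkeyr : (N : ℝ) / d + ((d : ℝ) - 1) * ((N : ℝ) * ((d : ℝ) - N) / ((d : ℝ) * ((d : ℝ) - 1)))
        = ((N : ℝ) / d) * ((d : ℝ) - N + 1) := by
      field_simp
      ring
    have hdbrr : (0 : ℝ) ≤ (d : ℝ) * ((N : ℝ) * ((d : ℝ) - N) / ((d : ℝ) * ((d : ℝ) - 1))) :=
      mul_nonneg (by linarith) hbnn
    rcases mul_eq_zero.mp hquad with h | h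
    · have h' : (μ : ℂ) = (((N : ℝ) / d - (N : ℝ) * ((d : ℝ) - N) / ((d : ℝ) * ((d : ℝ) - 1)) : ℝ) : ℂ) := by
        rw [sub_eq_zero] at h
        rw [h, hx, har, hbr]
        push_cast
        ring
      have hμr : μ = (N : ℝ) / d - (N : ℝ) * ((d : ℝ) - N) / ((d : ℝ) * ((d : ℝ) - 1)) := by
        exact_mod_cast h'
      rw [hμr, ← hkeyr]
      linarith
    · have h' : (μ : ℂ) = (((N : ℝ) / d + ((d : ℝ) - 1) * ((N : ℝ) * ((d : ℝ) - N) / ((d : ℝ) * ((d : ℝ) - 1))) : ℝ) : ℂ) := by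
        rw [sub_eq_zero] at h
        rw [h, hy, har, hbr]
        push_cast
        ring
      have hμr : μ = (N : ℝ) / d + ((d : ℝ) - 1) * ((N : ℝ) * ((d : ℝ) - N) / ((d : ℝ) * ((d : ℝ) - 1))) := by
        exact_mod_cast h'
      rw [hμr, hkeyr]
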